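/- For m = 1 and any Ferrers board B = (b_1,...,b_n), the sum over k from 0 to n of r_k(B) · x(x−1)···(x−(n−k)+1) equals the product over j from 1 to n of (x + b_j − j + 1). -/
import Mathlib

/-- The falling factorial `x↓_n = x(x-1)⋯(x-n+1)` (here with step `m`). -/
def fallFact (x : ℤ) (n m : ℕ) : ℤ := ∏ i ∈ Finset.range n, (x - (m : ℤ) * i)

/-- `(i, j)` (row `i`, column `j`, both 1-indexed) is a cell of the Ferrers board
with column heights `b 1, …, b n`. -/
def IsCell (b : ℕ → ℕ) (n : ℕ) (c : ℕ × ℕ) : Prop :=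
  1 ≤ c.2 ∧ c.2 ≤ n ∧ 1 ≤ c.1 ∧ c.1 ≤ b c.2

/-- A rook placement: cells of the board, no two in the same column, no two in the
same row. -/
def IsRookPlacement (b : ℕ → ℕ) (n : ℕ) (P : Finset (ℕ × ℕ)) : Prop :=
  (∀ c ∈ P, IsCell b n c) ∧
  (∀ c ∈ P, ∀ c' ∈ P, c.2 = c'.2 → c = c') ∧
  (∀ c ∈ P, ∀ c' ∈ P, c.1 = c'.1 → c = c')

/-- `r_k(B)`: the number of rook placements with `k` rooks. -/
noncomputable def rk (b : ℕ → ℕ) (n k : ℕ) : ℕ :=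
  Nat.card {P : Finset (ℕ × ℕ) // IsRookPlacement b n P ∧ P.card = k}

open Finset

namespace GJW

instance (b : ℕ → ℕ) (n : ℕ) : DecidablePred (IsCell b n) := fun c =>
  decidable_of_iff (1 ≤ c.2 ∧ c.2 ≤ n ∧ 1 ≤ c.1 ∧ c.1 ≤ b c.2) Iff.rfl

instance (b : ℕ → ℕ) (n : ℕ) : DecidablePred (IsRookPlacement b n) := fun P =>
  decidable_of_iff ((∀ c ∈ P, IsCell b n c) ∧
    (∀ c ∈ P, ∀ c' ∈ P, c.2 = c'.2 → c = c') ∧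
    (∀ c ∈ P, ∀ c' ∈ P, c.1 = c'.1 → c = c')) Iff.rfl

/-- The full board as a finset. -/
def boardF (b : ℕ → ℕ) (n : ℕ) : Finset (ℕ × ℕ) :=
  ((Icc 1 ((Icc 1 n).sup b)) ×ˢ (Icc 1 n)).filter (IsCell b n)

lemma mem_boardF {b : ℕ → ℕ} {n : ℕ} {c : ℕ × ℕ} : c ∈ boardF b n ↔ IsCell b n c := by
  constructor
  · intro h; exact (mem_filter.mp h).2
  · intro h
    obtain ⟨h1, h2, h3, h4⟩ := id h
    refine mem_filter.mpr ⟨mem_product.mpr ⟨mem_Icc.mpr ⟨h3, ?_⟩, mem_Icc.mpr ⟨h1, h2⟩⟩, h⟩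
    exact h4.trans (le_sup (mem_Icc.mpr ⟨h1, h2⟩))

/-- All rook placements of size `k` as a finset. -/
def placementsF (b : ℕ → ℕ) (n k : ℕ) : Finset (Finset (ℕ × ℕ)) :=
  (boardF b n).powerset.filter (fun P => IsRookPlacement b n P ∧ P.card = k)

lemma mem_placementsF {b : ℕ → ℕ} {n k : ℕ} {P : Finset (ℕ × ℕ)} :
    P ∈ placementsF b n k ↔ IsRookPlacement b n P ∧ P.card = k := by
  constructor
  · intro h; exact (mem_filter.mp h).2
  · intro h
    refine mem_filter.mpr ⟨mem_powerset.mpr (fun c hc => mem_boardF.mpr (h.1.1 c hc)), h⟩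

lemma rk_eq (b : ℕ → ℕ) (n k : ℕ) : rk b n k = (placementsF b n k).card := by
  have h : {P : Finset (ℕ × ℕ) | IsRookPlacement b n P ∧ P.card = k}
      = ↑(placementsF b n k) := by
    ext P; simp [mem_placementsF]
  rw [rk]
  calc Nat.card {P : Finset (ℕ × ℕ) // IsRookPlacement b n P ∧ P.card = k}
      = ({P : Finset (ℕ × ℕ) | IsRookPlacement b n P ∧ P.card = k} : Set _).ncard :=
        Nat.card_coe_set_eq _
    _ = ((placementsF b n k : Set (Finset (ℕ × ℕ)))).ncard := by rw [h]
    _ = (placementsF b n k).card := Set.ncard_coe_finset _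

lemma rk_zero (b : ℕ → ℕ) (n : ℕ) : rk b n 0 = 1 := by
  rw [rk_eq]
  have : placementsF b n 0 = {∅} := by
    ext P
    rw [mem_placementsF]
    simp only [Finset.card_eq_zero, mem_singleton]
    constructor
    · exact fun h => h.2
    · rintro rfl
      exact ⟨⟨fun c hc => absurd hc (by simp), fun c hc => absurd hc (by simp),
        fun c hc => absurd hc (by simp)⟩, rfl⟩
  rw [this, card_singleton]

lemma card_le_of_placement {b : ℕ → ℕ} {n : ℕ} {P : Finset (ℕ × ℕ)}
    (hP : IsRookPlacement b n P) : P.card ≤ n := by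
  have hinj : Set.InjOn Prod.snd P := fun c hc c' hc' h => hP.2.1 c hc c' hc' h
  have : P.card = (P.image Prod.snd).card := (Finset.card_image_of_injOn hinj).symm
  rw [this]
  have hsub : P.image Prod.snd ⊆ Icc 1 n := by
    intro j hj
    obtain ⟨c, hc, rfl⟩ := mem_image.mp hj
    exact mem_Icc.mpr ⟨(hP.1 c hc).1, (hP.1 c hc).2.1⟩
  calc (P.image Prod.snd).card ≤ (Icc 1 n).card := card_le_card hsub
    _ = n := by simp

lemma rk_eq_zero (b : ℕ → ℕ) (n k : ℕ) (h : n < k) : rk b n k = 0 := by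
  rw [rk_eq, Finset.card_eq_zero]
  rw [Finset.eq_empty_iff_forall_notMem]
  intro P hP
  rw [mem_placementsF] at hP
  have := card_le_of_placement hP.1
  omega

/-- rows of a placement lie in `Icc 1 (b N)` whenever columns are ≤ N and b monotone. -/
lemma rows_subset {b : ℕ → ℕ} {n : ℕ} {P : Finset (ℕ × ℕ)}
    (hP : IsRookPlacement b n P) (N : ℕ)
    (hmono : ∀ j, 1 ≤ j → j ≤ n → b j ≤ b N) :
    P.image Prod.fst ⊆ Icc 1 (b N) := by
  intro r hr
  obtain ⟨c, hc, rfl⟩ := mem_image.mp hr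
  obtain ⟨h1, h2, h3, h4⟩ := hP.1 c hc
  exact mem_Icc.mpr ⟨h3, h4.trans (hmono c.2 h1 h2)⟩

lemma card_rows {b : ℕ → ℕ} {n : ℕ} {P : Finset (ℕ × ℕ)}
    (hP : IsRookPlacement b n P) : (P.image Prod.fst).card = P.card :=
  Finset.card_image_of_injOn (fun c hc c' hc' h => hP.2.2 c hc c' hc' h)

lemma rk_le_of_ne_zero {b : ℕ → ℕ} {n k : ℕ} (N : ℕ)
    (hmono : ∀ j, 1 ≤ j → j ≤ n → b j ≤ b N)
    (h : rk b n k ≠ 0) : k ≤ b N := by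
  rw [rk_eq] at h
  obtain ⟨P, hP⟩ := Finset.card_ne_zero.mp h
  rw [mem_placementsF] at hP
  have h1 := rows_subset hP.1 N hmono
  have h2 := card_rows hP.1
  have := card_le_card h1
  rw [h2, hP.2] at this
  simpa using this

/-- Removing column `m+1` from a placement. -/
lemma placement_restrict {b : ℕ → ℕ} {m : ℕ} {P : Finset (ℕ × ℕ)}
    (hP : IsRookPlacement b (m + 1) P) (hcol : ∀ c ∈ P, c.2 ≠ m + 1) :
    IsRookPlacement b m P := by
  refine ⟨fun c hc => ?_, hP.2.1, hP.2.2⟩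
  obtain ⟨h1, h2, h3, h4⟩ := hP.1 c hc
  exact ⟨h1, by have := hcol c hc; omega, h3, h4⟩

lemma placement_extend {b : ℕ → ℕ} {m : ℕ} {P : Finset (ℕ × ℕ)}
    (hP : IsRookPlacement b m P) : IsRookPlacement b (m + 1) P := by
  refine ⟨fun c hc => ?_, hP.2.1, hP.2.2⟩
  obtain ⟨h1, h2, h3, h4⟩ := hP.1 c hc
  exact ⟨h1, by omega, h3, h4⟩

lemma cols_le {b : ℕ → ℕ} {m : ℕ} {P : Finset (ℕ × ℕ)}
    (hP : IsRookPlacement b m P) : ∀ c ∈ P, c.2 ≤ m := fun c hc => (hP.1 c hc).2.1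

/-- The key recurrence. -/
lemma rk_succ (b : ℕ → ℕ) (m k : ℕ)
    (hmono : ∀ j, 1 ≤ j → j ≤ m → b j ≤ b (m + 1)) :
    rk b (m + 1) (k + 1) = rk b m (k + 1) + (b (m + 1) - k) * rk b m k := by
  classical
  rw [rk_eq, rk_eq, rk_eq]
  set t := placementsF b (m + 1) (k + 1) with ht
  -- Part A
  have hA : t.filter (fun P => ∀ c ∈ P, c.2 ≠ m + 1) = placementsF b m (k + 1) := by
    ext P
    rw [mem_filter, mem_placementsF, mem_placementsF]
    constructor
    · rintro ⟨⟨h1, h2⟩, h3⟩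
      exact ⟨placement_restrict h1 h3, h2⟩
    · rintro ⟨h1, h2⟩
      refine ⟨⟨placement_extend h1, h2⟩, fun c hc => by have := cols_le h1 c hc; omega⟩
  -- Part B
  have hsmem : ∀ {P}, P ∈ t.filter (fun P => ¬ ∀ c ∈ P, c.2 ≠ m + 1) ↔
      (IsRookPlacement b (m + 1) P ∧ P.card = k + 1) ∧ ∃ c ∈ P, c.2 = m + 1 := by
    intro P
    rw [mem_filter, ht, mem_placementsF]
    simp only [not_forall]
    constructor
    · rintro ⟨h1, h2⟩
      obtain ⟨c, hc, hc2⟩ := h2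
      exact ⟨h1, c, hc, not_not.mp hc2⟩
    · rintro ⟨h1, c, hc, hc2⟩
      exact ⟨h1, c, hc, not_not.mpr hc2⟩
  have hB : (t.filter (fun P => ¬ ∀ c ∈ P, c.2 ≠ m + 1)).card
      = (b (m + 1) - k) * (placementsF b m k).card := by
    set s := t.filter (fun P => ¬ ∀ c ∈ P, c.2 ≠ m + 1) with hs
    have hmap : ∀ P ∈ s, P.filter (fun c => c.2 ≠ m + 1) ∈ placementsF b m k := by
      intro P hP
      obtain ⟨⟨h1, h2⟩, c0, hc0, hc02⟩ := hsmem.mp hP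
      rw [mem_placementsF]
      have hsub : P.filter (fun c => c.2 ≠ m + 1) ⊆ P := filter_subset _ _
      refine ⟨⟨fun c hc => ?_, fun c hc c' hc' h => h1.2.1 c (hsub hc) c' (hsub hc') h,
        fun c hc c' hc' h => h1.2.2 c (hsub hc) c' (hsub hc') h⟩, ?_⟩
      · obtain ⟨hcP, hcne⟩ := mem_filter.mp hc
        obtain ⟨a1, a2, a3, a4⟩ := h1.1 c hcP
        exact ⟨a1, by omega, a3, a4⟩
      · -- cardinality: exactly one cell in column m+1
        have hone : P.filter (fun c => c.2 = m + 1) = {c0} := by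
          ext c
          rw [mem_filter, mem_singleton]
          constructor
          · rintro ⟨hc, hc2⟩
            exact h1.2.1 c hc c0 hc0 (by rw [hc2, hc02])
          · rintro rfl; exact ⟨hc0, hc02⟩
        have hh := Finset.card_filter_add_card_filter_not
          (s := P) (p := fun c => c.2 = m + 1)
        simp only [hone, card_singleton] at hh
        have hPcard := h2
        simp only [ne_eq] at hh ⊢
        omega
    have hfibcard : ∀ P' ∈ placementsF b m k,
        (s.filter (fun P => P.filter (fun c => c.2 ≠ m + 1) = P')).card
          = b (m + 1) - k := by
      intro P' hP'
      rw [mem_placementsF] at hP'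
      have hfib : s.filter (fun P => P.filter (fun c => c.2 ≠ m + 1) = P')
          = (Icc 1 (b (m + 1)) \ P'.image Prod.fst).image
              (fun i => insert (i, m + 1) P') := by
        ext P
        rw [mem_filter, mem_image]
        constructor
        · rintro ⟨hPs, hφ⟩
          obtain ⟨⟨h1, h2⟩, c0, hc0, hc02⟩ := hsmem.mp hPs
          refine ⟨c0.1, ?_, ?_⟩
          · rw [mem_sdiff, mem_Icc]
            obtain ⟨a1, a2, a3, a4⟩ := h1.1 c0 hc0
            refine ⟨⟨a3, by rw [← hc02]; exact a4⟩, ?_⟩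
            intro hmem
            obtain ⟨c', hc', hc'1⟩ := mem_image.mp hmem
            have hc'P : c' ∈ P := by
              rw [← hφ] at hc'; exact (filter_subset _ _) hc'
            have hc'ne : c'.2 ≠ m + 1 := by
              rw [← hφ] at hc'; exact (mem_filter.mp hc').2
            have := h1.2.2 c' hc'P c0 hc0 hc'1
            rw [this] at hc'ne
            exact hc'ne hc02
          · -- P = insert (c0.1, m+1) P'
            have hc0eq : ((c0.1 : ℕ), m + 1) = c0 := by
              rw [← hc02]
            rw [hc0eq, ← hφ]
            ext c
            rw [mem_insert, mem_filter]
            constructor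
            · rintro (rfl | ⟨hc, _⟩)
              · exact hc0
              · exact hc
            · intro hc
              by_cases h : c.2 = m + 1
              · exact Or.inl (h1.2.1 c hc c0 hc0 (by rw [h, hc02]))
              · exact Or.inr ⟨hc, h⟩
        · rintro ⟨i, hi, rfl⟩
          rw [mem_sdiff, mem_Icc] at hi
          obtain ⟨⟨hi1, hi2⟩, hi3⟩ := hi
          have hnotmem : (i, m + 1) ∉ P' := by
            intro h
            exact absurd ((hP'.1.1 _ h).2.1) (by omega)
          have hrows : ∀ c ∈ P', c.1 ≠ i := by
            intro c hc h
            exact hi3 (mem_image.mpr ⟨c, hc, h⟩)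
          have hcols : ∀ c ∈ P', c.2 ≠ m + 1 := by
            intro c hc
            have := (hP'.1.1 c hc).2.1; omega
          have hplace : IsRookPlacement b (m + 1) (insert (i, m + 1) P') := by
            refine ⟨?_, ?_, ?_⟩
            · intro c hc
              rcases mem_insert.mp hc with rfl | hc
              · exact ⟨by simp, by simp, hi1, hi2⟩
              · exact (placement_extend hP'.1).1 c hc
            · intro c hc c' hc' h
              rcases mem_insert.mp hc with rfl | hc <;> rcases mem_insert.mp hc' with rfl | hc'
              · rfl
              · exact absurd (h.symm) (hcols c' hc')
              · exact absurd h (hcols c hc)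
              · exact hP'.1.2.1 c hc c' hc' h
            · intro c hc c' hc' h
              rcases mem_insert.mp hc with rfl | hc <;> rcases mem_insert.mp hc' with rfl | hc'
              · rfl
              · exact absurd (h.symm) (hrows c' hc')
              · exact absurd h (hrows c hc)
              · exact hP'.1.2.2 c hc c' hc' h
          refine ⟨hsmem.mpr ⟨⟨hplace, ?_⟩, ⟨(i, m + 1), mem_insert_self _ _, rfl⟩⟩, ?_⟩
          · rw [card_insert_of_notMem hnotmem, hP'.2]
          · rw [Finset.filter_insert]
            rw [if_neg (by simp)]
            exact Finset.filter_true_of_mem hcols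
      rw [hfib, Finset.card_image_of_injOn, Finset.card_sdiff_of_subset, Nat.card_Icc,
        card_rows hP'.1, hP'.2]
      · simp
      · exact rows_subset hP'.1 (m + 1) (fun j h1 h2 => hmono j h1 h2)
      · intro i hi i' hi' h
        have h'' : insert (i, m + 1) P' = insert (i', m + 1) P' := h
        have hmem1 : (i, m + 1) ∈ insert (i', m + 1) P' := by
          rw [← h'']; exact mem_insert_self _ _
        simp only [Finset.mem_coe, mem_sdiff, mem_Icc] at hi hi'
        rcases mem_insert.mp hmem1 with heq | hmem
        · exact (by simpa using heq)
        · exact absurd (mem_image.mpr ⟨_, hmem, rfl⟩) hi.2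
    rw [Finset.card_eq_sum_card_fiberwise hmap, Finset.sum_congr rfl hfibcard,
      Finset.sum_const, smul_eq_mul, mul_comm]
  calc t.card = (t.filter (fun P => ∀ c ∈ P, c.2 ≠ m + 1)).card
        + (t.filter (fun P => ¬ ∀ c ∈ P, c.2 ≠ m + 1)).card :=
      (Finset.card_filter_add_card_filter_not _).symm
    _ = (placementsF b m (k + 1)).card + (b (m + 1) - k) * (placementsF b m k).card := by
      rw [hA, hB]

lemma fallFact_succ (x : ℤ) (j : ℕ) :
    fallFact x (j + 1) 1 = fallFact x j 1 * (x - j) := by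
  rw [fallFact, fallFact, Finset.prod_range_succ]; norm_num

end GJW

open GJW

/-- The Goldman–Joichi–White Factorization Theorem: for any Ferrers board
`B = (b_1,…,b_n)`, `∑_k r_k(B) x↓_{n-k} = ∏_{j=1}^n (x + b_j − j + 1)`. -/
theorem factorization_theorem (n : ℕ) (b : ℕ → ℕ)
    (hmono : ∀ j k, 1 ≤ j → j ≤ k → k ≤ n → b j ≤ b k) (x : ℤ) :
    ∑ k ∈ Finset.range (n + 1), (rk b n k : ℤ) * fallFact x (n - k) 1 =
      ∏ j ∈ Finset.Icc 1 n, (x + (b j : ℤ) - (j : ℤ) + 1) := by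
  induction n with
  | zero =>
    simp [rk_zero, fallFact]
  | succ n ih =>
    have hmono' : ∀ j k, 1 ≤ j → j ≤ k → k ≤ n → b j ≤ b k :=
      fun j k h1 h2 h3 => hmono j k h1 h2 (h3.trans (Nat.le_succ n))
    have IH := ih hmono'
    rw [Finset.sum_range_succ']
    have hterm : ∀ k ∈ Finset.range (n + 1),
        (rk b (n + 1) (k + 1) : ℤ) * fallFact x (n + 1 - (k + 1)) 1
          = (rk b n (k + 1) : ℤ) * fallFact x (n + 1 - (k + 1)) 1
            + ((b (n + 1) - k : ℕ) : ℤ) * (rk b n k : ℤ) * fallFact x (n - k) 1 := by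
      intro k hk
      rw [rk_succ b n k (fun j h1 h2 => hmono j (n + 1) h1 (by omega) (le_refl _))]
      push_cast [Nat.succ_sub_succ]
      ring
    rw [Finset.sum_congr rfl hterm, Finset.sum_add_distrib]
    rw [rk_zero, Nat.cast_one]
    have hfirst : (∑ k ∈ Finset.range (n + 1),
          (rk b n (k + 1) : ℤ) * fallFact x (n + 1 - (k + 1)) 1)
          + (1 : ℤ) * fallFact x (n + 1 - 0) 1
        = ∑ k ∈ Finset.range (n + 1), (rk b n k : ℤ) * fallFact x (n + 1 - k) 1 := by
      have hh := Finset.sum_range_succ'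
        (fun k => (rk b n k : ℤ) * fallFact x (n + 1 - k) 1) (n + 1)
      rw [Finset.sum_range_succ] at hh
      rw [rk_eq_zero b n (n + 1) (by omega)] at hh
      simp only [rk_zero, Nat.cast_zero, zero_mul, add_zero, Nat.cast_one] at hh
      exact hh.symm
    rw [add_right_comm, hfirst]
    have hcomb : ∀ k ∈ Finset.range (n + 1),
        (rk b n k : ℤ) * fallFact x (n + 1 - k) 1
          + ((b (n + 1) - k : ℕ) : ℤ) * (rk b n k : ℤ) * fallFact x (n - k) 1
        = (x + (b (n + 1) : ℤ) - n) * ((rk b n k : ℤ) * fallFact x (n - k) 1) := by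
      intro k hk
      rw [Finset.mem_range] at hk
      by_cases hz : rk b n k = 0
      · simp [hz]
      · have hkb : k ≤ b (n + 1) := by
          exact rk_le_of_ne_zero (n + 1)
            (fun j h1 h2 => hmono j (n + 1) h1 (by omega) (le_refl _)) hz
        have h1 : n + 1 - k = (n - k) + 1 := by omega
        rw [h1, fallFact_succ]
        have h2 : ((b (n + 1) - k : ℕ) : ℤ) = (b (n + 1) : ℤ) - k := by omega
        have h3 : ((n - k : ℕ) : ℤ) = (n : ℤ) - k := by omega
        rw [h2, h3]
        ring
    rw [← Finset.sum_add_distrib, Finset.sum_congr rfl hcomb, ← Finset.mul_sum, IH]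
    rw [Finset.prod_Icc_succ_top (by omega)]
    push_cast
    ring
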